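/- arXiv:1903.08765 — 2 statements merged into one kernel-verified Lean document; each statement's English description precedes it below -/
import Mathlib

section
/- For any group B and integer p ≥ 2, if w ∈ (B ≀ C_p)' has the form w = (r_1, r_2, …, r_{p-1}, r_1^{-1}⋯r_{p-1}^{-1}[f,g]) in the base group, with r_1,…,r_{p-1}, f, g ∈ B, then w is a single commutator of two elements of B ≀ C_p. -/
/-- The cyclic shift action of `C_p = ZMod p` on the direct power `B^p`. -/
def cycShift (B : Type*) [Group B] (p : ℕ) :
    Multiplicative (ZMod p) →* MulAut (ZMod p → B) where
  toFun k := MulEquiv.arrowCongr (Equiv.addRight (Multiplicative.toAdd k)) (MulEquiv.refl B)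
  map_one' := by
    ext f i
    simp [MulEquiv.arrowCongr, Equiv.Perm.one_symm]
  map_mul' a b := by
    ext f i
    simp only [MulEquiv.arrowCongr, Equiv.coe_addRight, MulEquiv.coe_mk, Equiv.coe_fn_mk,
      MulEquiv.refl_apply, toAdd_mul, MulAut.mul_apply]
    congr 1
    simp only [Equiv.addRight_symm, Equiv.coe_addRight]
    abel

/-- The permutational wreath product `B ≀ C_p` with `C_p` acting on `p` points by cyclic shift. -/
abbrev Wr (B : Type*) [Group B] (p : ℕ) : Type _ :=
  (ZMod p → B) ⋊[cycShift B p] Multiplicative (ZMod p)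

open scoped commutatorElement

lemma wr_comm_eq (B : Type*) [Group B] (p : ℕ) (u v : ZMod p → B) :
    ⁅((SemidirectProduct.inl u : Wr B p) *
        SemidirectProduct.inr (Multiplicative.ofAdd (1:ZMod p))⁻¹ : Wr B p),
      (SemidirectProduct.inl v : Wr B p)⁆
      = SemidirectProduct.inl (fun i => u i * v (i + 1) * (u i)⁻¹ * (v i)⁻¹) := by
  rw [commutatorElement_def]
  ext i
  · simp only [SemidirectProduct.mul_left, SemidirectProduct.mul_right, SemidirectProduct.inv_left,
      SemidirectProduct.inv_right, SemidirectProduct.left_inl, SemidirectProduct.right_inl,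
      SemidirectProduct.left_inr, SemidirectProduct.right_inr]
    simp [cycShift, MulEquiv.arrowCongr, mul_assoc, sub_eq_add_neg]
  · simp


/-- if an element `w` of the base group of `B ≀ C_p` has the form
`(r_1, r_2, …, r_{p-1}, r_1⁻¹ ⋯ r_{p-1}⁻¹ [f,g])` (here the coordinate `i : ZMod p`
for `1 ≤ i ≤ p-1` carries `r_i`, and the last coordinate, which is `p ≡ 0 : ZMod p`,
carries `r_1⁻¹ ⋯ r_{p-1}⁻¹ ⁅f,g⁆`), then `w` is a single commutator of two
elements of `B ≀ C_p`. -/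
theorem base_form_is_commutator (B : Type*) [Group B] (p : ℕ) (hp : 2 ≤ p)
    (r : ZMod p → B) (f g : B)
    (hlast : r 0 = ((List.range (p - 1)).map fun i => (r ((i + 1 : ℕ) : ZMod p))⁻¹).prod * ⁅f, g⁆) :
    ∃ a b : Wr B p, SemidirectProduct.inl (φ := cycShift B p) r = ⁅a, b⁆ := by
  haveI : NeZero p := ⟨by omega⟩
  haveI : Fact (1 < p) := ⟨by omega⟩
  set Lp : ℕ → B := fun m => ((List.range m).map fun i => (r ((i + 1 : ℕ) : ZMod p))⁻¹).prod
    with hLp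
  set L : B := Lp (p - 1) with hL
  have hlast' : r 0 = L * ⁅f, g⁆ := hlast
  have hLpsucc : ∀ m : ℕ, Lp (m + 1) = Lp m * (r ((m + 1 : ℕ) : ZMod p))⁻¹ := by
    intro m
    simp [hLp, List.range_succ]
  set u : ZMod p → B := fun i => if i = 0 then L * f * L⁻¹ else 1 with hu
  set v : ZMod p → B := fun i => if i = 0 then g * L⁻¹ else (Lp (i.val - 1))⁻¹ * L * g * L⁻¹
    with hv
  refine ⟨(SemidirectProduct.inl u : Wr B p) *
      SemidirectProduct.inr (Multiplicative.ofAdd (1:ZMod p))⁻¹,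
    (SemidirectProduct.inl v : Wr B p), ?_⟩
  rw [wr_comm_eq]
  congr 1
  funext i
  by_cases hi : i = 0
  · subst hi
    have h1 : (0 : ZMod p) + 1 ≠ 0 := by
      simp only [zero_add]
      intro h
      have h2 := ZMod.val_one p
      rw [h] at h2
      simp [ZMod.val_zero] at h2
    have hval1 : ((0 : ZMod p) + 1).val = 1 := by
      simpa using ZMod.val_one p
    rw [hlast']
    simp only [hu, hv, if_pos rfl, if_neg h1, hval1]
    simp only [Nat.sub_self]
    have hLp0 : Lp 0 = 1 := by simp [hLp]
    rw [hLp0]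
    group
  · have hvpos : 1 ≤ i.val := by
      rcases Nat.eq_zero_or_pos i.val with h | h
      · exact absurd (by rw [← ZMod.natCast_zmod_val i, h, Nat.cast_zero]) hi
      · exact h
    have hvlt : i.val < p := ZMod.val_lt i
    have hicast : ((i.val : ℕ) : ZMod p) = i := ZMod.natCast_zmod_val i
    have hcast1 : ((i.val + 1 : ℕ) : ZMod p) = i + 1 := by push_cast [hicast]; ring
    have hstep : Lp i.val = Lp (i.val - 1) * (r i)⁻¹ := by
      have h' : i.val = (i.val - 1) + 1 := by omega
      rw [h', hLpsucc]
      congr 2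
      rw [← h', hicast]
    by_cases htop : i.val = p - 1
    · have hi1 : i + 1 = 0 := by
        rw [← hcast1, htop, (by omega : p - 1 + 1 = p), ZMod.natCast_self]
      simp only [hu, hv, if_neg hi, hi1, if_pos rfl, one_mul, inv_one, mul_one]
      have hstepL : L = Lp (i.val - 1) * (r i)⁻¹ := by rw [hL, ← htop]; exact hstep
      rw [hstepL]
      group
    · have hvlt' : i.val + 1 < p := by omega
      have hval1 : (i + 1).val = i.val + 1 := by
        rw [← hcast1, ZMod.val_natCast_of_lt hvlt']
      have hne : i + 1 ≠ 0 := by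
        intro h
        rw [h, ZMod.val_zero] at hval1
        omega
      simp only [hu, hv, if_neg hi, if_neg hne, hval1, one_mul, inv_one, mul_one,
        Nat.add_sub_cancel]
      rw [hstep]
      group
end

section
/- For every k ≥ 1, the group G_k defined recursively by G_1 = {e} and G_k = {(g_1,g_2)π ∈ B_{k-1} ≀ C_2 : g_1 g_2 ∈ G_{k-1}} is isomorphic to a Sylow 2-subgroup of the alternating group A_{2^k}. -/
/-- `BBgrp k` is the group `B_{k+1}`, the `(k+1)`-fold iterated wreath product of `C_2`:
`BBgrp 0 = C_2` and `BBgrp (k+1) = BBgrp k ≀ C_2`.  It is (isomorphic to) a Sylow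
2-subgroup of `S_{2^(k+1)}`. -/
def BBgrp : ℕ → GrpCat
  | 0 => GrpCat.of (Multiplicative (ZMod 2))
  | k + 1 => GrpCat.of (Wr (BBgrp k) 2)

/-- `GGset k` is the subset `G_{k+1}` of `B_{k+1} = BBgrp k`: `GGset 0 = {1}` and
`GGset (k+1) = {(g₁,g₂)π : g₁ * g₂ ∈ GGset k}`. -/
def GGset : (k : ℕ) → Set (BBgrp k)
  | 0 => {1}
  | k + 1 => {x : Wr (BBgrp k) 2 | x.left 0 * x.left 1 ∈ GGset k}

/-! ### Auxiliary: the representation of `BBgrp k` on a set with `2^(k+1)` elements -/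

/-- The leaves of the binary tree of depth `k+1`. -/
def VV : ℕ → Type
  | 0 => ZMod 2
  | k + 1 => ZMod 2 × VV k

instance instFintypeVV : ∀ k, Fintype (VV k)
  | 0 => inferInstanceAs (Fintype (ZMod 2))
  | k + 1 => letI := instFintypeVV k; inferInstanceAs (Fintype (ZMod 2 × VV k))

instance instDecEqVV : ∀ k, DecidableEq (VV k)
  | 0 => inferInstanceAs (DecidableEq (ZMod 2))
  | k + 1 => letI := instDecEqVV k; inferInstanceAs (DecidableEq (ZMod 2 × VV k))

lemma card_VV : ∀ k, Fintype.card (VV k) = 2 ^ (k + 1)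
  | 0 => rfl
  | k + 1 => by
    show Fintype.card (ZMod 2 × VV k) = _
    rw [Fintype.card_prod, card_VV k, ZMod.card]
    ring

instance instNonemptyVV (k : ℕ) : Nonempty (VV k) :=
  Fintype.card_pos_iff.mp (by rw [card_VV]; positivity)

/-- The representation of `C_2` on two points. -/
def rho0 : Multiplicative (ZMod 2) →* Equiv.Perm (ZMod 2) where
  toFun g := Equiv.addLeft (Multiplicative.toAdd g)
  map_one' := by ext x; simp
  map_mul' a b := by
    ext x
    simp [Equiv.Perm.mul_apply, add_assoc]

section WrPerm

variable {B : Type*} [Group B] {β : Type*}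

/-- The base-group part of the wreath action. -/
def wrF1 (r : B →* Equiv.Perm β) : (ZMod 2 → B) →* Equiv.Perm (ZMod 2 × β) where
  toFun f := Equiv.prodCongrRight fun i => r (f i)
  map_one' := by
    ext ⟨i, v⟩ <;> simp
  map_mul' f g := by
    ext ⟨i, v⟩ <;> simp [Equiv.Perm.mul_apply]

/-- The top-group part of the wreath action. -/
def wrF2 (β : Type*) : Multiplicative (ZMod 2) →* Equiv.Perm (ZMod 2 × β) where
  toFun π := Equiv.prodCongrLeft fun _ : β => Equiv.addLeft (Multiplicative.toAdd π)
  map_one' := by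
    ext ⟨i, v⟩ <;> simp
  map_mul' a b := by
    ext ⟨i, v⟩ <;> simp [Equiv.Perm.mul_apply, add_assoc]

lemma wrF1_apply (r : B →* Equiv.Perm β) (f : ZMod 2 → B) (i : ZMod 2) (v : β) :
    wrF1 r f (i, v) = (i, r (f i) v) := rfl

lemma wrF2_apply (π : Multiplicative (ZMod 2)) (i : ZMod 2) (v : β) :
    wrF2 β π (i, v) = (Multiplicative.toAdd π + i, v) := rfl

lemma cycShift_apply {p : ℕ} (g : Multiplicative (ZMod p)) (f : ZMod p → B) (j : ZMod p) :
    (cycShift B p g f) j = f (j - Multiplicative.toAdd g) := by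
  simp [cycShift, MulEquiv.arrowCongr, sub_eq_add_neg]

/-- The wreath-product representation built from a representation of the base group. -/
def wrRho (r : B →* Equiv.Perm β) : Wr B 2 →* Equiv.Perm (ZMod 2 × β) :=
  SemidirectProduct.lift (wrF1 r) (wrF2 β) (by
    intro g
    refine MonoidHom.ext fun f => Equiv.ext fun x => ?_
    obtain ⟨i, v⟩ := x
    show wrF1 r (cycShift B 2 g f) (i, v) =
      (wrF2 β g) ((wrF1 r f) ((wrF2 β g)⁻¹ (i, v)))
    have hinv : ((wrF2 β g)⁻¹ : Equiv.Perm (ZMod 2 × β)) (i, v) =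
        (-Multiplicative.toAdd g + i, v) := by
      rw [← map_inv]
      rfl
    rw [hinv]
    show (i, r ((cycShift B 2 g) f i) v) =
      (Multiplicative.toAdd g + (-Multiplicative.toAdd g + i),
        r (f (-Multiplicative.toAdd g + i)) v)
    have hs : ∀ a b : ZMod 2, b = a + (a + b) ∧ b - a = a + b := by decide
    refine Prod.ext ?_ ?_ <;> simp [cycShift_apply, neg_add_eq_sub]
    · exact (hs _ i).1
    · rw [(hs _ i).2])

lemma wrRho_inl (r : B →* Equiv.Perm β) (f : ZMod 2 → B) :
    wrRho r (SemidirectProduct.inl f) = wrF1 r f := by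
  unfold wrRho; exact SemidirectProduct.lift_inl _ _ _ _

lemma wrRho_inr (r : B →* Equiv.Perm β) (g : Multiplicative (ZMod 2)) :
    wrRho r (SemidirectProduct.inr g) = wrF2 β g := by
  unfold wrRho; exact SemidirectProduct.lift_inr _ _ _ _

lemma wrRho_apply (r : B →* Equiv.Perm β) (x : Wr B 2) (i : ZMod 2) (v : β) :
    wrRho r x (i, v) = (Multiplicative.toAdd x.right + i,
      r (x.left (Multiplicative.toAdd x.right + i)) v) := by
  conv_lhs => rw [← SemidirectProduct.inl_left_mul_inr_right x]
  rw [map_mul, Equiv.Perm.mul_apply, wrRho_inr, wrF2_apply, wrRho_inl, wrF1_apply]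

end WrPerm

/-- The faithful representation of `BBgrp k` on `VV k`. -/
def rho : (k : ℕ) → BBgrp k →* Equiv.Perm (VV k)
  | 0 => rho0
  | k + 1 => wrRho (rho k)

lemma rho_inj : ∀ k, Function.Injective (rho k)
  | 0 => by
    show Function.Injective rho0
    intro a b h
    have h0 := Equiv.ext_iff.mp h 0
    have h1 : Multiplicative.toAdd a + 0 = Multiplicative.toAdd b + 0 := h0
    have : Multiplicative.toAdd a = Multiplicative.toAdd b := by simpa using h1
    exact Multiplicative.toAdd.injective this
  | k + 1 => by
    show Function.Injective (wrRho (rho k))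
    rw [injective_iff_map_eq_one]
    intro x hx
    have hx' : ∀ (i : ZMod 2) (v : VV k), (wrRho (rho k)) x (i, v) = (i, v) := by
      intro i v; rw [hx]; rfl
    have hr : x.right = 1 := by
      have h0 := hx' 0 (Classical.arbitrary (VV k))
      rw [wrRho_apply] at h0
      have h1 : Multiplicative.toAdd x.right + 0 = 0 := congrArg Prod.fst h0
      have h2 : Multiplicative.toAdd x.right = 0 := by simpa using h1
      exact Multiplicative.toAdd.injective h2
    have hl : x.left = 1 := by
      funext i
      show x.left i = 1
      apply rho_inj k
      rw [map_one]
      apply Equiv.ext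
      intro v
      have h3 := hx' i v
      rw [wrRho_apply, hr] at h3
      have h4 := congrArg Prod.snd h3
      simpa using h4
    rw [← SemidirectProduct.inl_left_mul_inr_right x, hl, hr]
    simp

instance instFiniteBB (k : ℕ) : Finite (BBgrp k) :=
  Finite.of_injective (rho k) (rho_inj k)

lemma prod_zmod2 {M : Type*} [CommMonoid M] (g : ZMod 2 → M) :
    ∏ i : ZMod 2, g i = g 0 * g 1 := by
  have h : (Finset.univ : Finset (ZMod 2)) = {0, 1} := by decide
  rw [h, Finset.prod_insert (by decide), Finset.prod_singleton]

lemma sign_wrF1 {B β : Type*} [Group B] [Fintype β] [DecidableEq β]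
    (r : B →* Equiv.Perm β) (f : ZMod 2 → B) :
    Equiv.Perm.sign (wrF1 r f) = Equiv.Perm.sign (r (f 0)) * Equiv.Perm.sign (r (f 1)) := by
  show Equiv.Perm.sign (Equiv.prodCongrRight fun i => r (f i)) = _
  rw [Equiv.Perm.sign_prodCongrRight, prod_zmod2]

lemma sign_wrF2 {β : Type*} [Fintype β] [DecidableEq β]
    (h2 : Even (Fintype.card β)) (π : Multiplicative (ZMod 2)) :
    Equiv.Perm.sign (wrF2 β π) = 1 := by
  show Equiv.Perm.sign
    (Equiv.prodCongrLeft fun _ : β => Equiv.addLeft (Multiplicative.toAdd π)) = 1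
  rw [Equiv.Perm.sign_prodCongrLeft, Finset.prod_const, Finset.card_univ]
  obtain ⟨m, hm⟩ := h2
  rw [hm, pow_add]
  exact Int.units_mul_self _

lemma sign_rho : ∀ k (x : BBgrp k), Equiv.Perm.sign (rho k x) = 1 ↔ x ∈ GGset k
  | 0 => by
    have key : ∀ x : Multiplicative (ZMod 2),
        Equiv.Perm.sign (rho0 x) = 1 ↔ x ∈ ({1} : Set (Multiplicative (ZMod 2))) := by
      intro x
      simp only [Set.mem_singleton_iff]
      revert x
      decide
    exact key
  | k + 1 => by
    have key : ∀ x : Wr (BBgrp k) 2,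
        Equiv.Perm.sign (wrRho (rho k) x) = 1 ↔ x.left 0 * x.left 1 ∈ GGset k := by
      intro x
      conv_lhs => rw [← SemidirectProduct.inl_left_mul_inr_right x, map_mul, map_mul,
        wrRho_inl, wrRho_inr]
      rw [sign_wrF2 ⟨2 ^ k, by rw [card_VV]; ring⟩, mul_one, sign_wrF1, ← map_mul, ← map_mul]
      exact sign_rho k (x.left 0 * x.left 1)
    exact key

/-- A type-level equivalence splitting a semidirect product. -/
def sdpEquivProd {N G : Type*} [Group N] [Group G] (φ : G →* MulAut N) :
    (N ⋊[φ] G) ≃ N × G where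
  toFun x := (x.left, x.right)
  invFun p := ⟨p.1, p.2⟩
  left_inv _ := rfl
  right_inv _ := rfl

lemma card_BB : ∀ k, Nat.card (BBgrp k) = 2 ^ (2 ^ (k + 1) - 1)
  | 0 => by
    rw [show Nat.card (BBgrp 0) = Nat.card (Multiplicative (ZMod 2)) from rfl]
    simp [Nat.card_eq_fintype_card]
  | k + 1 => by
    have e : (BBgrp (k + 1) : Type) ≃ (ZMod 2 → BBgrp k) × Multiplicative (ZMod 2) :=
      sdpEquivProd (cycShift (BBgrp k) 2)
    rw [Nat.card_congr e, Nat.card_prod, Nat.card_fun, card_BB k]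
    have h1 : Nat.card (Multiplicative (ZMod 2)) = 2 := by simp [Nat.card_eq_fintype_card]
    have h2 : Nat.card (ZMod 2) = 2 := by simp [Nat.card_eq_fintype_card]
    rw [h1, h2, ← pow_mul, ← pow_succ]
    congr 1
    have h3 : (1 : ℕ) ≤ 2 ^ (k + 1) := Nat.one_le_two_pow
    have h4 : (2 : ℕ) ^ (k + 2) = 2 * 2 ^ (k + 1) := by ring
    omega

lemma exists_not_mem_GGset : ∀ k, ∃ x : BBgrp k, x ∉ GGset k
  | 0 => by
    refine ⟨(Multiplicative.ofAdd (1 : ZMod 2) : Multiplicative (ZMod 2)), ?_⟩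
    intro hx
    simp only [GGset, Set.mem_singleton_iff] at hx
    have h2 := congrArg Multiplicative.toAdd (hx : Multiplicative.ofAdd (1 : ZMod 2) = 1)
    have h3 : (1 : ZMod 2) = 0 := h2
    exact one_ne_zero h3
  | k + 1 => by
    obtain ⟨b, hb⟩ := exists_not_mem_GGset k
    refine ⟨SemidirectProduct.inl (fun i => if i = 0 then b else 1), ?_⟩
    show (fun i => if i = (0 : ZMod 2) then b else 1) 0 *
        (fun i => if i = (0 : ZMod 2) then b else 1) 1 ∈ GGset k → False
    simp only [if_pos rfl, if_neg (by decide : ¬(1 : ZMod 2) = 0), mul_one]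
    exact hb

/-- `Perm`-conjugation by an equivalence, as a `MulEquiv`. -/
def permCongrMul {α β : Type*} (e : α ≃ β) : Equiv.Perm α ≃* Equiv.Perm β :=
  { e.permCongr with
    map_mul' := fun p q => by
      apply Equiv.ext; intro x
      simp [Equiv.permCongr_apply, Equiv.Perm.mul_apply] }

lemma sum_pow_div : ∀ m : ℕ, ∑ i ∈ Finset.range m, 2 ^ m / 2 ^ (i + 1) = 2 ^ m - 1
  | 0 => rfl
  | m + 1 => by
    rw [Finset.sum_range_succ']
    have hpt : ∀ i ∈ Finset.range m, 2 ^ (m + 1) / 2 ^ (i + 1 + 1) = 2 ^ m / 2 ^ (i + 1) := by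
      intro i _
      rw [pow_succ' 2 m, pow_succ' 2 (i + 1)]
      exact Nat.mul_div_mul_left _ _ (by norm_num)
    rw [Finset.sum_congr rfl hpt, sum_pow_div m]
    have h1 : (1 : ℕ) ≤ 2 ^ m := Nat.one_le_two_pow
    have h2 : (2 : ℕ) ^ (m + 1) = 2 * 2 ^ m := by ring
    have h3 : (2 : ℕ) ^ (m + 1) / 2 ^ (0 + 1) = 2 ^ m := by rw [h2]; simp
    omega

lemma factorization_two_pow_factorial (m : ℕ) :
    (Nat.factorial (2 ^ m)).factorization 2 = 2 ^ m - 1 := by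
  haveI : Fact (Nat.Prime 2) := ⟨Nat.prime_two⟩
  rw [Nat.factorization_def _ Nat.prime_two,
    padicValNat_factorial (b := m + 1) (by rw [Nat.log_pow one_lt_two]; omega)]
  rw [Finset.sum_Ico_eq_sum_range]
  simp only [Nat.add_sub_cancel]
  calc ∑ i ∈ Finset.range m, 2 ^ m / 2 ^ (1 + i)
      = ∑ i ∈ Finset.range m, 2 ^ m / 2 ^ (i + 1) :=
        Finset.sum_congr rfl fun i _ => by rw [add_comm 1 i]
    _ = 2 ^ m - 1 := sum_pow_div m

/-- for every `k ≥ 1` the group `G_k` is isomorphic to a Sylow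
2-subgroup of the alternating group `A_{2^k}` (indexing: `GGset k` is `G_{k+1}`,
a subset of `BBgrp k = B_{k+1}`, and it is compared with `Syl₂ A_{2^(k+1)}`). -/
theorem GG_iso_sylow_alternating (k : ℕ) (H : Subgroup (BBgrp k))
    (hH : (H : Set (BBgrp k)) = GGset k)
    (P : Sylow 2 (alternatingGroup (Fin (2 ^ (k + 1))))) :
    Nonempty (↥H ≃* ↥P) := by
  classical
  haveI : Fact (Nat.Prime 2) := ⟨Nat.prime_two⟩
  have hn2 : 2 ≤ 2 ^ (k + 1) := by
    have h : (2 : ℕ) ^ 1 ≤ 2 ^ (k + 1) :=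
      Nat.pow_le_pow_right (by norm_num) (by omega)
    simpa using h
  -- the character: sign of the permutation representation
  set χ : BBgrp k →* ℤˣ := (Equiv.Perm.sign).comp (rho k) with hχ
  -- H is the kernel of χ
  have hker : H = χ.ker := by
    ext x
    have hmem : x ∈ H ↔ x ∈ GGset k := by rw [← hH]; rfl
    rw [hmem, MonoidHom.mem_ker, hχ, MonoidHom.comp_apply]
    exact (sign_rho k x).symm
  -- χ is surjective
  have hsurj : Function.Surjective χ := by
    intro u
    rcases Int.units_eq_one_or u with rfl | rfl
    · exact ⟨1, map_one χ⟩
    · obtain ⟨x, hx⟩ := exists_not_mem_GGset k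
      refine ⟨x, ?_⟩
      rcases Int.units_eq_one_or (χ x) with h | h
      · exact absurd ((sign_rho k x).mp h) hx
      · exact h
  -- cardinality of H
  have hcardH : Nat.card H = 2 ^ (2 ^ (k + 1) - 2) := by
    have h1 : Nat.card χ.ker * χ.ker.index = Nat.card (BBgrp k) :=
      Subgroup.card_mul_index _
    have h2 : χ.ker.index = Nat.card χ.range := Subgroup.index_ker χ
    have h3 : χ.range = ⊤ := MonoidHom.range_eq_top.mpr hsurj
    have h4 : Nat.card χ.range = 2 := by
      rw [h3, Nat.card_congr Subgroup.topEquiv.toEquiv, Nat.card_eq_fintype_card,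
        Fintype.card_units_int]
    have h5 : Nat.card χ.ker * 2 = 2 ^ (2 ^ (k + 1) - 1) := by
      rw [← card_BB k, ← h1, h2, h4]
    have h6 : (2 : ℕ) ^ (2 ^ (k + 1) - 1) = 2 ^ (2 ^ (k + 1) - 2) * 2 := by
      rw [← pow_succ]
      congr 1
      omega
    rw [hker]
    exact Nat.eq_of_mul_eq_mul_right (by norm_num) (h5.trans h6)
  -- the embedding into the alternating group
  have e : VV k ≃ Fin (2 ^ (k + 1)) := Fintype.equivFinOfCardEq (by rw [card_VV k])
  set ψ : BBgrp k →* Equiv.Perm (Fin (2 ^ (k + 1))) := (permCongrMul e).toMonoidHom.comp (rho k) with hψ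
  have hψinj : Function.Injective ψ := fun a b hab =>
    rho_inj k ((permCongrMul e).injective hab)
  have hψsign : ∀ x : BBgrp k, Equiv.Perm.sign (ψ x) = Equiv.Perm.sign (rho k x) :=
    fun x => Equiv.Perm.sign_permCongr e (rho k x)
  have hmemA : ∀ h : H, ψ (h : BBgrp k) ∈ alternatingGroup (Fin (2 ^ (k + 1))) := by
    intro h
    rw [Equiv.Perm.mem_alternatingGroup, hψsign]
    apply (sign_rho k _).mpr
    have hh : (h : BBgrp k) ∈ (H : Set (BBgrp k)) := h.2
    rwa [hH] at hh
  set θ : H →* alternatingGroup (Fin (2 ^ (k + 1))) :=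
    (ψ.comp H.subtype).codRestrict (alternatingGroup (Fin (2 ^ (k + 1)))) hmemA with hθ
  have hθinj : Function.Injective θ := by
    intro a b hab
    have h1 : ψ (H.subtype a) = ψ (H.subtype b) := congrArg Subtype.val hab
    exact Subtype.coe_injective (hψinj h1)
  -- the image as a Sylow subgroup of the alternating group
  have iso1 : H ≃* θ.range := MonoidHom.ofInjective hθinj
  have hcardQ : Nat.card θ.range = 2 ^ (2 ^ (k + 1) - 2) := by
    rw [Nat.card_congr iso1.toEquiv.symm, hcardH]
  haveI : Nontrivial (Fin (2 ^ (k + 1))) := Fin.nontrivial_iff_two_le.mpr hn2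
  have hcardA : 2 * Fintype.card (alternatingGroup (Fin (2 ^ (k + 1)))) = Nat.factorial (2 ^ (k + 1)) := by
    rw [two_mul_card_alternatingGroup, Fintype.card_perm, Fintype.card_fin]
  have hfactA : (Nat.card (alternatingGroup (Fin (2 ^ (k + 1))))).factorization 2 = 2 ^ (k + 1) - 2 := by
    have hA0 : Fintype.card (alternatingGroup (Fin (2 ^ (k + 1)))) ≠ 0 := Fintype.card_ne_zero
    have h7 : (Nat.factorial (2 ^ (k + 1))).factorization 2 = 2 ^ (k + 1) - 1 :=
      factorization_two_pow_factorial (k + 1)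
    have h8 : ((2 * Fintype.card (alternatingGroup (Fin (2 ^ (k + 1))))).factorization) 2 =
        1 + (Fintype.card (alternatingGroup (Fin (2 ^ (k + 1))))).factorization 2 := by
      rw [Nat.factorization_mul (by norm_num) hA0]
      simp [Nat.Prime.factorization_self Nat.prime_two]
    rw [hcardA, h7] at h8
    rw [Nat.card_eq_fintype_card]
    omega
  set QS : Sylow 2 (alternatingGroup (Fin (2 ^ (k + 1)))) :=
    Sylow.ofCard θ.range (by rw [hcardQ, hfactA]) with hQS
  haveI : Finite (Sylow 2 (alternatingGroup (Fin (2 ^ (k + 1))))) := by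
    haveI : Finite (Subgroup (alternatingGroup (Fin (2 ^ (k + 1))))) :=
      Finite.of_injective (fun S : Subgroup (alternatingGroup (Fin (2 ^ (k + 1)))) => (S : Set (alternatingGroup (Fin (2 ^ (k + 1)))))) SetLike.coe_injective
    exact Finite.of_injective Sylow.toSubgroup fun P₁ P₂ h => Sylow.ext h
  have hco : (QS : Subgroup (alternatingGroup (Fin (2 ^ (k + 1))))) = θ.range := by
    rw [hQS, Sylow.coe_ofCard]
  have iso2 : (↥θ.range) ≃* ↥(QS : Subgroup (alternatingGroup (Fin (2 ^ (k + 1))))) :=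
    MulEquiv.subgroupCongr hco.symm
  have iso3 : (↥(QS : Subgroup (alternatingGroup (Fin (2 ^ (k + 1)))))) ≃* ↥P := Sylow.equiv QS P
  exact ⟨iso1.trans (iso2.trans iso3)⟩
end
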